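/- Let u : ℝ → ℝ be twice continuously differentiable with u, u′, u″ bounded, and vanish on (-∞, 0]. Then for every x > 0, lim_{α→1−} (α/Γ(1−α)) ∫_0^∞ (u(x) − u(x−y)) y^{-α-1} dy = u′(x); that is, the right Marchaud derivative D^α_{x+} u(x) converges to u′(x) as α ↑ 1. -/

import Mathlib

open MeasureTheory Real Set Filter Topology

/-- For `u` twice continuously differentiable with `u, u′, u″` bounded, vanishing
on `(-∞,0]`, the right Marchaud derivative
`D^α_{x+} u(x) = (α/Γ(1−α)) ∫_0^∞ (u(x) − u(x−y)) y^{-α-1} dy`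
converges to `u′(x)` as `α ↑ 1`, for every `x > 0`. -/
theorem marchaud_limit_alpha_one
    (u : ℝ → ℝ) (hC2 : ContDiff ℝ 2 u) (M : ℝ)
    (hbd : ∀ x, |u x| ≤ M ∧ |deriv u x| ≤ M ∧ |deriv (deriv u) x| ≤ M)
    (hu0 : ∀ x ≤ (0:ℝ), u x = 0)
    (x : ℝ) (hx : 0 < x) :
    Tendsto
      (fun α : ℝ =>
        (α / Real.Gamma (1 - α)) * ∫ y in Ioi (0:ℝ), (u x - u (x - y)) * y ^ (-α - 1))
      (𝓝[<] 1) (𝓝 (deriv u x)) := by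
  have hM0 : 0 ≤ M := le_trans (abs_nonneg _) (hbd 0).1
  have hu_cont : Continuous u := hC2.continuous
  have hdu : Differentiable ℝ u := hC2.differentiable (by norm_num)
  have hddu : Differentiable ℝ (deriv u) := by
    have h2 : ContDiff ℝ ((1:WithTop ℕ∞) + 1) u := by norm_num; exact hC2
    exact ((contDiff_succ_iff_deriv.mp h2).2.2).differentiable one_ne_zero
  set s := deriv u x with hs
  -- Lipschitz bound for `deriv u`
  have hlip : ∀ a b : ℝ, |deriv u b - deriv u a| ≤ M * |b - a| := by
    intro a b
    have : LipschitzWith M.toNNReal (deriv u) := by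
      apply lipschitzWith_of_nnnorm_deriv_le hddu
      intro t
      rw [← NNReal.coe_le_coe, coe_nnnorm, Real.coe_toNNReal _ hM0]
      exact (hbd t).2.2
    have h := this.dist_le_mul b a
    rwa [Real.dist_eq, Real.dist_eq, Real.coe_toNNReal _ hM0] at h
  -- second order Taylor bound
  have htaylor : ∀ y : ℝ, 0 ≤ y → |u x - u (x - y) - s * y| ≤ M * y ^ 2 := by
    intro y hy
    set g : ℝ → ℝ := fun t => u t - s * t with hg
    have hxy : x - y ≤ x := by linarith
    have hgder : ∀ t ∈ Icc (x - y) x,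
        HasDerivWithinAt g (deriv u t - s) (Icc (x - y) x) t := by
      intro t _
      have : HasDerivAt g (deriv u t - s * 1) t :=
        (hdu t).hasDerivAt.sub ((hasDerivAt_id t).const_mul s)
      simpa using this.hasDerivWithinAt
    have hbound : ∀ t ∈ Ico (x - y) x, ‖deriv u t - s‖ ≤ M * y := by
      intro t ht
      have h1 : |deriv u t - deriv u x| ≤ M * |t - x| := hlip x t
      have h2 : |t - x| ≤ y := by
        rw [abs_le]; constructor <;> [linarith [ht.1]; linarith [ht.2.le]]
      calc ‖deriv u t - s‖ = |deriv u t - deriv u x| := rfl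
        _ ≤ M * |t - x| := h1
        _ ≤ M * y := by nlinarith
    have := norm_image_sub_le_of_norm_deriv_le_segment' hgder hbound x
      (right_mem_Icc.mpr hxy)
    have heq : g x - g (x - y) = u x - u (x - y) - s * y := by simp [hg]; ring
    rw [heq] at this
    calc |u x - u (x - y) - s * y| ≤ M * y * (x - (x - y)) := this
      _ = M * y ^ 2 := by ring
  -- Lipschitz bound for `u`
  have hulip : ∀ a b : ℝ, |u b - u a| ≤ M * |b - a| := by
    intro a b
    have : LipschitzWith M.toNNReal u := by
      apply lipschitzWith_of_nnnorm_deriv_le hdu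
      intro t
      rw [← NNReal.coe_le_coe, coe_nnnorm, Real.coe_toNNReal _ hM0]
      exact (hbd t).2.1
    have h := this.dist_le_mul b a
    rwa [Real.dist_eq, Real.dist_eq, Real.coe_toNNReal _ hM0] at h
  set E : ℝ → ℝ := fun α => ∫ y in Ioc (0:ℝ) x, (u x - u (x - y) - s * y) * y ^ (-α - 1)
    with hE
  set C : ℝ := M * (x ^ (2:ℝ) + x) with hC
  -- bound on the error term
  have hEbd : ∀ α ∈ Ioo (0:ℝ) 1, |E α| ≤ C := by
    intro α hα
    obtain ⟨hα0, hα1⟩ := hα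
    have hint : IntegrableOn (fun y : ℝ => M * y ^ (1 - α)) (Ioc 0 x) := by
      have : IntervalIntegrable (fun y : ℝ => y ^ (1 - α)) volume 0 x :=
        intervalIntegral.intervalIntegrable_rpow' (by linarith)
      exact ((intervalIntegrable_iff_integrableOn_Ioc_of_le hx.le).mp this).const_mul M
    have hb : ∀ᵐ y ∂(volume.restrict (Ioc (0:ℝ) x)),
        ‖(u x - u (x - y) - s * y) * y ^ (-α - 1)‖ ≤ M * y ^ (1 - α) := by
      filter_upwards [ae_restrict_mem measurableSet_Ioc] with y hy
      have hy0 : (0:ℝ) < y := hy.1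
      have hr : |u x - u (x - y) - s * y| ≤ M * y ^ 2 := htaylor y hy0.le
      have hpos : (0:ℝ) ≤ y ^ (-α - 1) := (Real.rpow_pos_of_pos hy0 _).le
      calc ‖(u x - u (x - y) - s * y) * y ^ (-α - 1)‖
          = |u x - u (x - y) - s * y| * y ^ (-α - 1) := by
            rw [norm_mul, Real.norm_eq_abs, Real.norm_eq_abs, abs_of_nonneg hpos]
        _ ≤ (M * y ^ 2) * y ^ (-α - 1) := by gcongr
        _ = M * (y ^ (2:ℝ) * y ^ (-α - 1)) := by rw [← Real.rpow_natCast y 2]; push_cast; ring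
        _ = M * y ^ (1 - α) := by rw [← Real.rpow_add hy0]; ring_nf
    have h1 : |E α| ≤ ∫ y in Ioc (0:ℝ) x, M * y ^ (1 - α) := by
      simpa [Real.norm_eq_abs] using norm_integral_le_of_norm_le hint hb
    have h2 : ∫ y in Ioc (0:ℝ) x, M * y ^ (1 - α) = M * (x ^ (2 - α) / (2 - α)) := by
      rw [MeasureTheory.integral_const_mul, ← intervalIntegral.integral_of_le hx.le,
        integral_rpow (Or.inl (by linarith : (-1:ℝ) < 1 - α))]
      rw [Real.zero_rpow (by linarith : (1 - α) + 1 ≠ 0)]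
      ring_nf
    have h3 : x ^ (2 - α) ≤ x ^ (2:ℝ) + x := by
      rcases le_total x 1 with h | h
      · have : x ^ (2 - α) ≤ x ^ (1:ℝ) :=
          Real.rpow_le_rpow_of_exponent_ge hx h (by linarith)
        have hx2 : (0:ℝ) ≤ x ^ (2:ℝ) := (Real.rpow_pos_of_pos hx _).le
        rw [Real.rpow_one] at this; linarith
      · have : x ^ (2 - α) ≤ x ^ (2:ℝ) :=
          Real.rpow_le_rpow_of_exponent_le h (by linarith)
        linarith
    have h4 : x ^ (2 - α) / (2 - α) ≤ x ^ (2 - α) := by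
      apply div_le_self (Real.rpow_pos_of_pos hx _).le (by linarith)
    calc |E α| ≤ M * (x ^ (2 - α) / (2 - α)) := h1.trans_eq h2
      _ ≤ M * (x ^ (2:ℝ) + x) := by nlinarith [Real.rpow_pos_of_pos hx (2 - α)]
  -- key identity
  have hkey : ∀ α ∈ Ioo (0:ℝ) 1,
      (α / Real.Gamma (1 - α)) * ∫ y in Ioi (0:ℝ), (u x - u (x - y)) * y ^ (-α - 1)
        = s * (α * x ^ (1 - α) / Real.Gamma (2 - α))
          + (α * (1 - α) / Real.Gamma (2 - α)) * E α
          + u x * (x ^ (-α) * (1 - α) / Real.Gamma (2 - α)) := by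
    intro α hα
    obtain ⟨hα0, hα1⟩ := hα
    have hΓpos : 0 < Real.Gamma (1 - α) := Real.Gamma_pos_of_pos (by linarith)
    have hΓ : Real.Gamma (2 - α) = (1 - α) * Real.Gamma (1 - α) := by
      have h := Real.Gamma_add_one (s := 1 - α) (by linarith)
      rw [show (1 - α) + 1 = 2 - α by ring] at h
      exact h
    -- measurability helpers
    have hmeas : ∀ (S : Set ℝ), MeasurableSet S → (∀ y ∈ S, y ≠ 0) →
        ∀ (v : ℝ → ℝ), Continuous v →
        AEStronglyMeasurable (fun y => v y * y ^ (-α - 1)) (volume.restrict S) := by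
      intro S hS hS0 v hv
      apply ContinuousOn.aestronglyMeasurable _ hS
      exact hv.continuousOn.mul (fun y hy =>
        (Real.continuousAt_rpow_const y _ (Or.inl (hS0 y hy))).continuousWithinAt)
    -- integrability on (0, x]
    have hint_rpow : ∀ r : ℝ, -1 < r → IntegrableOn (fun y : ℝ => y ^ r) (Ioc 0 x) := by
      intro r hr
      exact (intervalIntegrable_iff_integrableOn_Ioc_of_le hx.le).mp
        (intervalIntegral.intervalIntegrable_rpow' hr)
    have hint1 : IntegrableOn (fun y : ℝ => (u x - u (x - y)) * y ^ (-α - 1)) (Ioc 0 x) := by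
      apply Integrable.mono' ((hint_rpow (-α) (by linarith)).const_mul M)
      · exact hmeas _ measurableSet_Ioc (fun y hy => ne_of_gt hy.1) _
          (continuous_const.sub (hu_cont.comp (continuous_const.sub continuous_id)))
      · filter_upwards [ae_restrict_mem measurableSet_Ioc] with y hy
        have hy0 : (0:ℝ) < y := hy.1
        have h1 : |u x - u (x - y)| ≤ M * y := by
          have := hulip (x - y) x
          rwa [show x - (x - y) = y by ring, abs_of_nonneg hy0.le] at this
        have hpos : (0:ℝ) ≤ y ^ (-α - 1) := (Real.rpow_pos_of_pos hy0 _).le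
        calc ‖(u x - u (x - y)) * y ^ (-α - 1)‖
            = |u x - u (x - y)| * y ^ (-α - 1) := by
              rw [norm_mul, Real.norm_eq_abs, Real.norm_eq_abs, abs_of_nonneg hpos]
          _ ≤ (M * y) * y ^ (-α - 1) := by gcongr
          _ = M * (y ^ (1:ℝ) * y ^ (-α - 1)) := by rw [Real.rpow_one]; ring
          _ = M * y ^ (-α) := by rw [← Real.rpow_add hy0]; ring_nf
    have hint2 : IntegrableOn (fun y : ℝ => (u x - u (x - y)) * y ^ (-α - 1)) (Ioi x) := by
      apply IntegrableOn.congr_fun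
        (((integrableOn_Ioi_rpow_of_lt (by linarith : -α - 1 < -1) hx).const_mul (u x)))
        _ measurableSet_Ioi
      intro y hy
      have : u (x - y) = 0 := hu0 _ (by simp only [mem_Ioi] at hy; linarith)
      simp [this]
    -- split the integral
    have hsplit : ∫ y in Ioi (0:ℝ), (u x - u (x - y)) * y ^ (-α - 1)
        = (∫ y in Ioc (0:ℝ) x, (u x - u (x - y)) * y ^ (-α - 1))
          + ∫ y in Ioi x, (u x - u (x - y)) * y ^ (-α - 1) := by
      rw [← Ioc_union_Ioi_eq_Ioi hx.le]
      exact setIntegral_union (Ioc_disjoint_Ioi le_rfl) measurableSet_Ioi hint1 hint2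
    -- tail integral
    have htail : ∫ y in Ioi x, (u x - u (x - y)) * y ^ (-α - 1) = u x * (x ^ (-α) / α) := by
      rw [setIntegral_congr_fun measurableSet_Ioi (g := fun y => u x * y ^ (-α - 1))
        (fun y hy => by
          have : u (x - y) = 0 := hu0 _ (by simp only [mem_Ioi] at hy; linarith)
          simp [this])]
      rw [MeasureTheory.integral_const_mul, integral_Ioi_rpow_of_lt (by linarith) hx]
      rw [show (-α - 1) + 1 = -α by ring]
      field_simp
    -- main part
    have hmain : ∫ y in Ioc (0:ℝ) x, (u x - u (x - y)) * y ^ (-α - 1)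
        = s * (x ^ (1 - α) / (1 - α)) + E α := by
      have hintr : IntegrableOn (fun y : ℝ => (u x - u (x - y) - s * y) * y ^ (-α - 1))
          (Ioc 0 x) := by
        apply Integrable.mono' ((hint_rpow (1 - α) (by linarith)).const_mul M)
        · exact hmeas _ measurableSet_Ioc (fun y hy => ne_of_gt hy.1) _
            ((continuous_const.sub (hu_cont.comp (continuous_const.sub continuous_id))).sub
              (continuous_const.mul continuous_id))
        · filter_upwards [ae_restrict_mem measurableSet_Ioc] with y hy
          have hy0 : (0:ℝ) < y := hy.1
          have hpos : (0:ℝ) ≤ y ^ (-α - 1) := (Real.rpow_pos_of_pos hy0 _).le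
          calc ‖(u x - u (x - y) - s * y) * y ^ (-α - 1)‖
              = |u x - u (x - y) - s * y| * y ^ (-α - 1) := by
                rw [norm_mul, Real.norm_eq_abs, Real.norm_eq_abs, abs_of_nonneg hpos]
            _ ≤ (M * y ^ 2) * y ^ (-α - 1) := by gcongr; exact htaylor y hy0.le
            _ = M * (y ^ (2:ℝ) * y ^ (-α - 1)) := by
                rw [← Real.rpow_natCast y 2]; push_cast; ring
            _ = M * y ^ (1 - α) := by rw [← Real.rpow_add hy0]; ring_nf
      have hints : IntegrableOn (fun y : ℝ => s * y ^ (-α)) (Ioc 0 x) :=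
        (hint_rpow (-α) (by linarith)).const_mul s
      have heq : ∀ y ∈ Ioc (0:ℝ) x, (u x - u (x - y)) * y ^ (-α - 1)
          = s * y ^ (-α) + (u x - u (x - y) - s * y) * y ^ (-α - 1) := by
        intro y hy
        have hy0 : (0:ℝ) < y := hy.1
        have : y ^ (-α) = y ^ (1:ℝ) * y ^ (-α - 1) := by
          rw [← Real.rpow_add hy0]; ring_nf
        rw [this, Real.rpow_one]; ring
      rw [setIntegral_congr_fun measurableSet_Ioc heq, integral_add hints hintr,
        MeasureTheory.integral_const_mul]
      congr 1
      rw [← intervalIntegral.integral_of_le hx.le,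
        integral_rpow (Or.inl (by linarith : (-1:ℝ) < -α)),
        Real.zero_rpow (by linarith : -α + 1 ≠ 0)]
      rw [show -α + 1 = 1 - α by ring]
      ring
    have h1 : Real.Gamma (1 - α) ≠ 0 := hΓpos.ne'
    have h2 : (1:ℝ) - α ≠ 0 := by linarith
    have h3 : α ≠ 0 := hα0.ne'
    rw [hsplit, htail, hmain, hΓ]
    field_simp
  -- limits
  have hmem : Ioo (0:ℝ) 1 ∈ 𝓝[<] (1:ℝ) := Ioo_mem_nhdsLT zero_lt_one
  have hΓcont : ContinuousAt (fun α : ℝ => Real.Gamma (2 - α)) 1 := by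
    have h1 : ContinuousAt Real.Gamma ((fun α : ℝ => 2 - α) 1) := by
      have : ((fun α : ℝ => 2 - α) 1) = 1 := by norm_num
      rw [this]
      exact (Real.differentiableAt_Gamma (fun m => by
        have h0 : (0:ℝ) ≤ (m:ℝ) := Nat.cast_nonneg m
        intro h; linarith [h.le])).continuousAt
    exact h1.comp ((continuous_const.sub continuous_id).continuousAt)
  have hΓ1 : Real.Gamma ((2:ℝ) - 1) = 1 := by
    norm_num [Real.Gamma_one]
  have hxc : Continuous fun t : ℝ => x ^ t := by
    have : (fun t : ℝ => x ^ t) = fun t : ℝ => Real.exp (Real.log x * t) := by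
      funext t; rw [Real.rpow_def_of_pos hx]
    rw [this]
    exact Real.continuous_exp.comp (continuous_const.mul continuous_id)
  -- limit of first term
  have l1 : Tendsto (fun α : ℝ => s * (α * x ^ (1 - α) / Real.Gamma (2 - α)))
      (𝓝[<] 1) (𝓝 s) := by
    have hc : ContinuousAt (fun α : ℝ => s * (α * x ^ (1 - α) / Real.Gamma (2 - α))) 1 := by
      apply ContinuousAt.mul continuousAt_const
      apply ContinuousAt.div
      · exact continuousAt_id.mul ((hxc.comp (continuous_const.sub continuous_id)).continuousAt)
      · exact hΓcont
      · rw [hΓ1]; norm_num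
    have := hc.tendsto.mono_left (nhdsWithin_le_nhds : 𝓝[<] (1:ℝ) ≤ 𝓝 1)
    convert this using 2
    norm_num [Real.Gamma_one]
  -- limit of third term
  have l3 : Tendsto (fun α : ℝ => u x * (x ^ (-α) * (1 - α) / Real.Gamma (2 - α)))
      (𝓝[<] 1) (𝓝 0) := by
    have hc : ContinuousAt
        (fun α : ℝ => u x * (x ^ (-α) * (1 - α) / Real.Gamma (2 - α))) 1 := by
      apply ContinuousAt.mul continuousAt_const
      apply ContinuousAt.div
      · exact ((hxc.comp continuous_neg).continuousAt).mul
          ((continuous_const.sub continuous_id).continuousAt)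
      · exact hΓcont
      · rw [hΓ1]; norm_num
    have := hc.tendsto.mono_left (nhdsWithin_le_nhds : 𝓝[<] (1:ℝ) ≤ 𝓝 1)
    convert this using 2
    norm_num [Real.Gamma_one]
  -- limit of second term
  have l2 : Tendsto (fun α : ℝ => (α * (1 - α) / Real.Gamma (2 - α)) * E α)
      (𝓝[<] 1) (𝓝 0) := by
    apply squeeze_zero_norm' (a := fun α : ℝ => |α * (1 - α) / Real.Gamma (2 - α)| * C)
    · filter_upwards [hmem] with α hα
      rw [norm_mul, Real.norm_eq_abs, Real.norm_eq_abs]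
      exact mul_le_mul_of_nonneg_left (hEbd α hα) (abs_nonneg _)
    · have hc : ContinuousAt (fun α : ℝ => |α * (1 - α) / Real.Gamma (2 - α)| * C) 1 := by
        apply ContinuousAt.mul _ continuousAt_const
        apply ContinuousAt.abs
        apply ContinuousAt.div
        · exact continuousAt_id.mul ((continuous_const.sub continuous_id).continuousAt)
        · exact hΓcont
        · rw [hΓ1]; norm_num
      have := hc.tendsto.mono_left (nhdsWithin_le_nhds : 𝓝[<] (1:ℝ) ≤ 𝓝 1)
      convert this using 2
      norm_num [Real.Gamma_one]
  have hsum := (l1.add l2).add l3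
  rw [add_zero, add_zero] at hsum
  apply hsum.congr'
  filter_upwards [hmem] with α hα
  exact (hkey α hα).symm
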